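/- Let 𝓗 be a complex Hilbert space, V a bounded self-adjoint operator on 𝓗, 𝒱 the closure of the range of V, and π : 𝓗 → 𝒱 the orthogonal projection onto 𝒱 (so π* is the inclusion of 𝒱 into 𝓗). Let G be a bounded operator on 𝓗 such that 1 − VG is invertible, and assume the compression πVπ* is invertible in the bounded operators on 𝒱. Then the operator (πVπ*)⁻¹ − πGπ* is invertible on 𝒱 and (1 − VG)⁻¹V = π*((πVπ*)⁻¹ − πGπ*)⁻¹π. -/

import Mathlib

noncomputable section

open ContinuousLinearMap

/-- Let `V` be a bounded self-adjoint operator on a complex Hilbert space `𝓗`,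
`K` the closure of its range, `π : 𝓗 → K` the orthogonal projection (characterized by
`π* = inclusion`). If `1 - V G` is invertible and the compression `π V π*` is invertible on `K`,
then `(π V π*)⁻¹ - π G π*` is invertible on `K` and
`(1 - V G)⁻¹ V = π* ((π V π*)⁻¹ - π G π*)⁻¹ π`. -/
theorem stmt3 {𝓗 : Type*} [NormedAddCommGroup 𝓗] [InnerProductSpace ℂ 𝓗] [CompleteSpace 𝓗]
    (V G : 𝓗 →L[ℂ] 𝓗) (hV : IsSelfAdjoint V)
    (K : Submodule ℂ 𝓗) (hK : K = (LinearMap.range (V : 𝓗 →ₗ[ℂ] 𝓗)).topologicalClosure)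
    [CompleteSpace K]
    (π : 𝓗 →L[ℂ] K) (hπ : ContinuousLinearMap.adjoint π = K.subtypeL)
    (hVG : IsUnit (1 - V * G))
    (hcomp : IsUnit (π ∘L V ∘L K.subtypeL)) :
    IsUnit (Ring.inverse (π ∘L V ∘L K.subtypeL) - π ∘L G ∘L K.subtypeL) ∧
    Ring.inverse (1 - V * G) * V =
      K.subtypeL ∘L
        Ring.inverse (Ring.inverse (π ∘L V ∘L K.subtypeL) - π ∘L G ∘L K.subtypeL) ∘L π := by
  have hπorth : π = (K.orthogonalProjectionOnto : 𝓗 →L[ℂ] K) := by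
    rw [← adjoint_adjoint π, hπ, Submodule.adjoint_subtypeL]
  have hmemK : ∀ x, V x ∈ K := by
    intro x
    rw [hK]
    exact Submodule.le_topologicalClosure _ ⟨x, rfl⟩
  have p1 : ∀ y : K, π (K.subtypeL y) = y := by
    intro y
    simp [hπorth, Submodule.orthogonalProjectionOnto_mem_subspace_eq_self]
  have p2 : ∀ x, (K.subtypeL (π (V x)) : 𝓗) = V x := by
    intro x
    simp [hπorth, Submodule.starProjection_eq_self_iff.mpr (hmemK x)]
  have hVorth : ∀ y ∈ Kᗮ, V y = 0 := by
    intro y hy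
    refine ext_inner_right ℂ fun z => ?_
    rw [inner_zero_left]
    rw [← ContinuousLinearMap.isSelfAdjoint_iff'.mp hV]
    rw [adjoint_inner_left]
    exact inner_eq_zero_symm.mp (hy _ (hmemK z))
  have p3 : ∀ x, V (K.subtypeL (π x)) = V x := by
    intro x
    have hx : x - K.subtypeL (π x) ∈ Kᗮ := by
      rw [hπorth]; exact K.sub_starProjection_mem_orthogonal x
    have := hVorth _ hx
    rw [map_sub, sub_eq_zero] at this
    exact this.symm
  set A := π ∘L V ∘L K.subtypeL with hA
  set S : 𝓗 →L[ℂ] 𝓗 := ↑hVG.unit⁻¹ with hS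
  have hS1 : (1 - V * G) * S = 1 := hVG.mul_val_inv
  have hS2 : S * (1 - V * G) = 1 := hVG.val_inv_mul
  have hRS : Ring.inverse (1 - V * G) = S := by
    rw [← hVG.unit_spec, Ring.inverse_unit]
  have hA1 : A * Ring.inverse A = 1 := Ring.mul_inverse_cancel A hcomp
  have hA2 : Ring.inverse A * A = 1 := Ring.inverse_mul_cancel A hcomp
  have p4 : ∀ z : K, V (K.subtypeL z) = K.subtypeL (A z) := by
    intro z
    simp only [hA, comp_apply]
    exact (p2 _).symm
  have p5 : ∀ y : K, A (Ring.inverse A y) = y := by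
    intro y
    have := DFunLike.congr_fun hA1 y
    simpa [mul_apply_eq_comp] using this
  have p9 : ∀ y : K, Ring.inverse A (A y) = y := by
    intro y
    have := DFunLike.congr_fun hA2 y
    simpa [mul_apply_eq_comp] using this
  have p6 : ∀ x, S x - S (V (G x)) = x := by
    intro x
    have := DFunLike.congr_fun hS2 x
    simpa [mul_apply_eq_comp, sub_apply, map_sub] using this
  have p8 : ∀ x, π (V x) = A (π x) := by
    intro x
    conv_lhs => rw [← p3 x]
    simp only [hA, comp_apply]
  -- key identity : S * V = V * (1 + G * (S * V))
  have e1 : (1 - V * G) * (S * V) = V := by rw [← mul_assoc, hS1, one_mul]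
  have key : S * V = V * (1 + G * (S * V)) := by
    have h := e1
    rw [sub_mul, one_mul] at h
    rw [mul_add, mul_one, ← mul_assoc]
    exact sub_eq_iff_eq_add.mp h
  have p7 : ∀ x, S (V x) = V (x + G (S (V x))) := by
    intro x
    have := DFunLike.congr_fun key x
    simpa [mul_apply_eq_comp, add_apply, one_apply_eq_self, map_add] using this
  set C : K →L[ℂ] K := (π ∘L (S * V)) ∘L K.subtypeL with hC
  set B : K →L[ℂ] K := Ring.inverse A - π ∘L G ∘L K.subtypeL with hB
  have hCapp : ∀ x, C (π x) = π (S (V (K.subtypeL (π x)))) := by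
    intro x; simp only [hC, comp_apply, mul_apply_eq_comp]
  have hCB : C * B = 1 := by
    ext y
    simp only [mul_apply_eq_comp, one_apply_eq_self, hB, sub_apply, hC, comp_apply, map_sub]
    rw [p3 (G (K.subtypeL y))]
    rw [p4 (Ring.inverse A y), p5 y]
    rw [← map_sub π, p6, p1]
  have hBC : B * C = 1 := by
    ext y
    simp only [mul_apply_eq_comp, one_apply_eq_self, hB, sub_apply, hC, comp_apply]
    rw [p7 (K.subtypeL y)]
    rw [p2]
    rw [p8, p9]
    rw [← map_sub π, ← p7 (K.subtypeL y), add_sub_cancel_right, p1]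
  have hBunit : IsUnit B := ⟨⟨B, C, hBC, hCB⟩, rfl⟩
  have hRB : Ring.inverse B = C := Ring.inverse_unit ⟨B, C, hBC, hCB⟩
  refine ⟨hBunit, ?_⟩
  rw [hRS, hRB]
  ext x
  simp only [mul_apply_eq_comp, comp_apply, hC]
  rw [p3 x]
  rw [p7 x, p2]
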